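/- arXiv:1207.7290 — 2 statements merged into one kernel-verified Lean document; each statement's English description precedes it below -/
import Mathlib

section
/- Let Φ be a Blaschke Minkowski homomorphism. For all convex bodies K_1, ..., K_{n-1} in R^n, the Steiner point of the mixed body satisfies s(Φ(K_1,...,K_{n-1})) = o (the origin), and consequently the origin lies in the interior of Φ(K_1,...,K_{n-1}). -/
open MeasureTheory Metric
open scoped RealInnerProductSpace Pointwise

noncomputable section

/-- Euclidean space ℝⁿ. -/
abbrev Euc (n : ℕ) := EuclideanSpace ℝ (Fin n)

/-- The unit sphere S^{n-1} ⊂ ℝⁿ. -/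
abbrev Sph (n : ℕ) := Metric.sphere (0 : Euc n) 1

/-- Spherical Lebesgue measure on S^{n-1}. -/
def sphMeasure (n : ℕ) [NeZero n] : Measure (Sph n) := volume.toSphere

/-- Convex bodies in ℝⁿ. -/
abbrev CBody (n : ℕ) := ConvexBody (Euc n)

/-- The support function h(K,u) = max{u·x : x ∈ K} restricted to the sphere. -/
def supportFn (n : ℕ) (K : CBody n) (u : Sph n) : ℝ :=
  sSup ((fun x => ⟪x, (u : Euc n)⟫) '' (K : Set (Euc n)))

/-- Two convex bodies are homothetic: equal up to translation and positive dilation. -/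
def Homothetic (n : ℕ) (K L : CBody n) : Prop :=
  ∃ c : ℝ, 0 < c ∧ ∃ t : Euc n, (L : Set (Euc n)) = t +ᵥ c • (K : Set (Euc n))

/-- The Euclidean unit ball as a convex body. -/
def unitBall (n : ℕ) : CBody n :=
  ⟨closedBall 0 1, convex_closedBall 0 1, isCompact_closedBall 0 1,
    Metric.nonempty_closedBall.2 zero_le_one⟩

/-- The Steiner point s(K) = n ⨍ h(K,u) u du (mean with respect to the normalized
spherical measure). -/
def steinerPoint (n : ℕ) [NeZero n] (K : CBody n) : Euc n :=
  (n : ℝ) • (((sphMeasure n) Set.univ).toReal)⁻¹ •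
    ∫ u, supportFn n K u • (u : Euc n) ∂(sphMeasure n)

section Aux

variable {n : ℕ} [NeZero n]

/-- The sphere self-map induced by a linear isometry equivalence. -/
def sphMap (e : Euc n ≃ₗᵢ[ℝ] Euc n) (u : Sph n) : Sph n :=
  ⟨e u, by
    have : ‖(u:Euc n)‖ = 1 := mem_sphere_zero_iff_norm.mp u.2
    simpa [mem_sphere_zero_iff_norm] using this⟩

def sphHomeo (e : Euc n ≃ₗᵢ[ℝ] Euc n) : Sph n ≃ₜ Sph n where
  toFun := sphMap e
  invFun := sphMap e.symm
  left_inv u := by simp [sphMap]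
  right_inv u := by simp [sphMap]
  continuous_toFun := Continuous.subtype_mk (e.continuous.comp continuous_subtype_val) _
  continuous_invFun := Continuous.subtype_mk (e.symm.continuous.comp continuous_subtype_val) _

example : True := trivial

theorem sphMap_measurePreserving (e : Euc n ≃ₗᵢ[ℝ] Euc n) :
    MeasurePreserving (sphMap e) (sphMeasure n) (sphMeasure n) := by
  refine ⟨(sphHomeo e).continuous.measurable, ?_⟩
  have hfun : (sphMap e : Sph n → Sph n) = ⇑(sphHomeo e) := rfl
  ext s hs
  rw [hfun, ((sphHomeo e).measurableEmbedding).map_apply]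
  rw [sphMeasure, Measure.toSphere_apply' _ (hs.preimage (sphHomeo e).continuous.measurable),
    Measure.toSphere_apply' _ hs]
  congr 1
  have h1 : (Subtype.val '' ((sphHomeo e) ⁻¹' s) : Set (Euc n)) = e.symm '' (Subtype.val '' s) := by
    ext x
    constructor
    · rintro ⟨u, hu, rfl⟩
      exact ⟨e u, ⟨sphMap e u, hu, rfl⟩, by simp⟩
    · rintro ⟨y, ⟨w, hw, rfl⟩, rfl⟩
      refine ⟨sphMap e.symm w, ?_, rfl⟩
      show sphMap e (sphMap e.symm w) ∈ s
      have : sphMap e (sphMap e.symm w) = w := Subtype.ext (by simp [sphMap])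
      rwa [this]
  rw [h1]
  have h2 : (Set.Ioo (0:ℝ) 1) • (e.symm '' (Subtype.val '' s)) =
      e.symm '' ((Set.Ioo (0:ℝ) 1) • (Subtype.val '' s)) := by
    ext x
    simp only [Set.mem_smul, Set.mem_image]
    constructor
    · rintro ⟨r, hr, y, ⟨a, ha, rfl⟩, rfl⟩
      exact ⟨r • a, ⟨r, hr, a, ha, rfl⟩, by simp⟩
    · rintro ⟨y, ⟨r, hr, a, ha, rfl⟩, rfl⟩
      exact ⟨r, hr, e.symm a, ⟨a, ha, rfl⟩, by simp⟩
  rw [h2]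
  have h3 : e.symm '' (Set.Ioo (0:ℝ) 1 • (Subtype.val '' s)) =
      ⇑e ⁻¹' (Set.Ioo (0:ℝ) 1 • (Subtype.val '' s)) := by
    ext x
    constructor
    · rintro ⟨y, hy, rfl⟩; simp only [Set.mem_preimage]; rwa [LinearIsometryEquiv.apply_symm_apply]
    · intro hx; exact ⟨e x, hx, by simp⟩
  rw [h3]
  have h4 : volume (⇑e ⁻¹' (Set.Ioo (0:ℝ) 1 • Subtype.val '' s))
      = Measure.map (⇑e) volume (Set.Ioo (0:ℝ) 1 • Subtype.val '' s) :=
    ((e.toHomeomorph.toMeasurableEquiv).map_apply _).symm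
  rw [h4, e.measurePreserving.map_eq]

theorem integral_sphMap {G : Type*} [NormedAddCommGroup G] [NormedSpace ℝ G]
    (e : Euc n ≃ₗᵢ[ℝ] Euc n) (f : Sph n → G) :
    ∫ u, f (sphMap e u) ∂(sphMeasure n) = ∫ u, f u ∂(sphMeasure n) :=
  (sphMap_measurePreserving e).integral_comp (sphHomeo e).measurableEmbedding f

def pt0 (n : ℕ) [NeZero n] : Sph n :=
  ⟨EuclideanSpace.single ⟨0, Nat.pos_of_ne_zero (NeZero.ne n)⟩ (1:ℝ), by
    simp [mem_sphere_zero_iff_norm, EuclideanSpace.norm_single]⟩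

theorem sph_exists_const (g : ℝ → ℝ) :
    ∃ c : ℝ, ∀ w : Sph n,
      (∫ v, g ⟪(w:Euc n),(v:Euc n)⟫ • (v:Euc n) ∂(sphMeasure n)) = c • (w:Euc n) := by
  set I : Sph n → Euc n := fun w => ∫ v, g ⟪(w:Euc n),(v:Euc n)⟫ • (v:Euc n) ∂(sphMeasure n)
    with hI
  have trans : ∀ (w : Sph n) (e : Euc n ≃ₗᵢ[ℝ] Euc n), I (sphMap e w) = e (I w) := by
    intro w e
    have h1 : I (sphMap e w)
        = ∫ v, g ⟪(e w : Euc n), ((sphMap e v : Sph n) : Euc n)⟫ • ((sphMap e v : Sph n) : Euc n)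
            ∂(sphMeasure n) := by
      rw [hI]
      exact (integral_sphMap e (fun v => g ⟪(e (w:Euc n)), (v:Euc n)⟫ • (v:Euc n))).symm
    have h2 : ∀ v : Sph n, g ⟪(e w : Euc n), ((sphMap e v : Sph n) : Euc n)⟫
        • ((sphMap e v : Sph n) : Euc n)
        = e.toLinearIsometry (g ⟪(w:Euc n), (v:Euc n)⟫ • (v:Euc n)) := by
      intro v
      show g ⟪e (w:Euc n), e (v:Euc n)⟫ • (e (v:Euc n)) = _
      rw [LinearIsometryEquiv.inner_map_map]
      simp
    rw [h1]
    simp_rw [h2]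
    exact LinearIsometry.integral_comp_comm e.toLinearIsometry _
  -- step 1: I (pt0 n) is a multiple of pt0 n
  have hu0 : ‖((pt0 n : Sph n) : Euc n)‖ = 1 := mem_sphere_zero_iff_norm.mp (pt0 n).2
  obtain ⟨a, ha⟩ : ∃ a : ℝ, I (pt0 n) = a • ((pt0 n : Sph n) : Euc n) := by
    have e := Submodule.reflection (ℝ ∙ ((pt0 n : Sph n) : Euc n))
    have hfix : sphMap (Submodule.reflection (ℝ ∙ ((pt0 n : Sph n) : Euc n))) (pt0 n) = pt0 n :=
      Subtype.ext (Submodule.reflection_mem_subspace_eq_self (Submodule.mem_span_singleton_self _))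
    have := trans (pt0 n) (Submodule.reflection (ℝ ∙ ((pt0 n : Sph n) : Euc n)))
    rw [hfix] at this
    have hmem : I (pt0 n) ∈ (ℝ ∙ ((pt0 n : Sph n) : Euc n)) :=
      (Submodule.reflection_eq_self_iff _).mp this.symm
    exact Submodule.mem_span_singleton.mp hmem |>.imp (fun a h => h.symm)
  refine ⟨a, fun w => ?_⟩
  have hw : ‖(w : Euc n)‖ = 1 := mem_sphere_zero_iff_norm.mp w.2
  set e := Submodule.reflection (ℝ ∙ (((pt0 n : Sph n) : Euc n) - (w : Euc n)))ᗮ with he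
  have h1 : e ((pt0 n : Sph n) : Euc n) = (w : Euc n) :=
    Submodule.reflection_sub (by rw [hu0, hw])
  have hmap : sphMap e (pt0 n) = w := Subtype.ext h1
  have := trans (pt0 n) e
  rw [hmap, ha] at this
  show I w = a • (w : Euc n)
  rw [this]
  simp [h1]

instance sphMeasure_finite : IsFiniteMeasure (sphMeasure n) := by
  unfold sphMeasure; infer_instance

theorem integral_supp_zero (g : ℝ → ℝ) (hg : Continuous g) (P : Measure (Sph n))
    [IsFiniteMeasure P] (hc : ∫ u, (u : Euc n) ∂P = 0)
    (h : Sph n → ℝ) (hh : ∀ v, h v = ∫ u, g ⟪(u:Euc n),(v:Euc n)⟫ ∂P) :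
    ∫ v, h v • (v : Euc n) ∂(sphMeasure n) = 0 := by
  obtain ⟨c, hcst⟩ := sph_exists_const (n := n) g
  have hcontuv : Continuous (Function.uncurry
      (fun (v : Sph n) (u : Sph n) => g ⟪(u:Euc n),(v:Euc n)⟫ • (v:Euc n))) := by
    apply Continuous.fun_smul
    · exact hg.comp ((continuous_subtype_val.comp continuous_snd).inner
        (continuous_subtype_val.comp continuous_fst))
    · exact continuous_subtype_val.comp continuous_fst
  have hint : Integrable (Function.uncurry
      (fun (v : Sph n) (u : Sph n) => g ⟪(u:Euc n),(v:Euc n)⟫ • (v:Euc n)))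
      ((sphMeasure n).prod P) :=
    hcontuv.integrable_of_hasCompactSupport (HasCompactSupport.of_compactSpace _)
  calc ∫ v, h v • (v:Euc n) ∂(sphMeasure n)
      = ∫ v, ∫ u, g ⟪(u:Euc n),(v:Euc n)⟫ • (v:Euc n) ∂P ∂(sphMeasure n) := by
        refine integral_congr_ae (Filter.Eventually.of_forall fun v => ?_)
        show h v • (v:Euc n) = ∫ u, g ⟪(u:Euc n),(v:Euc n)⟫ • (v:Euc n) ∂P
        rw [hh v]
        exact (integral_smul_const _ _).symm
    _ = ∫ u, ∫ v, g ⟪(u:Euc n),(v:Euc n)⟫ • (v:Euc n) ∂(sphMeasure n) ∂P :=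
        integral_integral_swap hint
    _ = ∫ u, c • (u:Euc n) ∂P := by
        refine integral_congr_ae (Filter.Eventually.of_forall fun u => ?_)
        exact hcst u
    _ = c • ∫ u, (u:Euc n) ∂P := integral_smul c _
    _ = 0 := by rw [hc, smul_zero]

theorem bddAbove_inner (K : CBody n) (u : Euc n) :
    BddAbove ((fun x => ⟪x, u⟫) '' (K : Set (Euc n))) :=
  (K.isCompact.image (continuous_id.inner continuous_const)).bddAbove

theorem le_supportFn (K : CBody n) (u : Sph n) {x : Euc n} (hx : x ∈ (K : Set (Euc n))) :
    ⟪x, (u : Euc n)⟫ ≤ supportFn n K u :=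
  le_csSup (bddAbove_inner K u) ⟨x, hx, rfl⟩

theorem supportFn_le (K : CBody n) (u : Sph n) {b : ℝ}
    (hb : ∀ x ∈ (K : Set (Euc n)), ⟪x, (u : Euc n)⟫ ≤ b) : supportFn n K u ≤ b :=
  csSup_le (K.nonempty.image _) (by rintro y ⟨x, hx, rfl⟩; exact hb x hx)

theorem supportFn_continuous (K : CBody n) : Continuous (supportFn n K) := by
  obtain ⟨R, hR⟩ := K.isCompact.isBounded.subset_closedBall 0
  have hRn : ∀ x ∈ (K : Set (Euc n)), ‖x‖ ≤ R := fun x hx =>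
    mem_closedBall_zero_iff.mp (hR hx)
  have key : ∀ u u' : Sph n, supportFn n K u ≤ supportFn n K u' + R * dist u u' := by
    intro u u'
    refine supportFn_le K u fun x hx => ?_
    have h1 : ⟪x, (u : Euc n)⟫ = ⟪x, (u' : Euc n)⟫ + ⟪x, (u : Euc n) - (u' : Euc n)⟫ := by
      rw [inner_sub_right]; ring
    have h2 : ⟪x, (u : Euc n) - (u' : Euc n)⟫ ≤ R * dist u u' := by
      calc ⟪x, (u : Euc n) - (u' : Euc n)⟫ ≤ ‖x‖ * ‖(u : Euc n) - (u' : Euc n)‖ :=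
            real_inner_le_norm _ _
        _ ≤ R * dist u u' := by
            rw [Subtype.dist_eq, dist_eq_norm]
            have h3 : (0:ℝ) ≤ ‖(u : Euc n) - (u' : Euc n)‖ := norm_nonneg _
            have h4 := hRn x hx
            nlinarith [norm_nonneg x]
    linarith [le_supportFn K u' hx]
  rw [Metric.continuous_iff]
  intro u ε hε
  have hR0 : 0 ≤ R := le_trans (norm_nonneg _) (hRn _ K.nonempty.choose_spec)
  refine ⟨ε / (R + 1), by positivity, fun u' hu' => ?_⟩
  have k1 := key u' u
  have k2 := key u u'
  rw [dist_comm] at k2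
  have hR1 : (0:ℝ) < R + 1 := by linarith
  have hd2 : dist u' u * (R+1) < ε := (lt_div_iff₀ hR1).mp hu'
  have hd : R * dist u' u < ε := by nlinarith [dist_nonneg (x := u') (y := u)]
  rw [Real.dist_eq, abs_lt]
  constructor <;> linarith

theorem sphMeasure_pos_of_isOpen {s : Set (Sph n)} (hs : IsOpen s) (hne : s.Nonempty) :
    0 < sphMeasure n s := by
  obtain ⟨U, hU, hsU⟩ := isOpen_induced_iff.mp hs
  set W : Set (Euc n) := (fun x => ‖x‖) ⁻¹' (Set.Ioo 0 1) with hW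
  have hWopen : IsOpen W := isOpen_Ioo.preimage continuous_norm
  set q : Euc n → Euc n := fun x => ‖x‖⁻¹ • x with hq
  have hqcont : ContinuousOn q W := by
    refine ContinuousOn.smul ((continuous_norm.continuousOn).inv₀ fun x hx => ?_)
      continuousOn_id
    exact ne_of_gt hx.1
  set O : Set (Euc n) := W ∩ q ⁻¹' U with hO
  have hOopen : IsOpen O := hqcont.isOpen_inter_preimage hWopen hU
  have hOne : O.Nonempty := by
    obtain ⟨u, hu⟩ := hne
    have hun : ‖(u : Euc n)‖ = 1 := mem_sphere_zero_iff_norm.mp u.2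
    refine ⟨(2⁻¹ : ℝ) • (u : Euc n), ?_, ?_⟩
    · show ‖(2⁻¹ : ℝ) • (u : Euc n)‖ ∈ Set.Ioo (0:ℝ) 1
      rw [norm_smul, hun]
      norm_num
    · show q ((2⁻¹ : ℝ) • (u : Euc n)) ∈ U
      have : q ((2⁻¹ : ℝ) • (u : Euc n)) = (u : Euc n) := by
        rw [hq]
        simp only [norm_smul, hun]
        rw [smul_smul]
        norm_num
      rw [this]
      rw [← hsU] at hu
      exact hu
  have hsub : O ⊆ Set.Ioo (0:ℝ) 1 • (Subtype.val '' s) := by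
    rintro x ⟨hxW, hxU⟩
    have hx0 : 0 < ‖x‖ := hxW.1
    have hy : ‖‖x‖⁻¹ • x‖ = 1 := by
      rw [norm_smul, norm_inv, norm_norm, inv_mul_cancel₀ (ne_of_gt hx0)]
    set uy : Sph n := ⟨‖x‖⁻¹ • x, by rwa [mem_sphere_zero_iff_norm]⟩ with huy
    have hus : uy ∈ s := by
      rw [← hsU]
      exact hxU
    have hxeq : x = ‖x‖ • ((uy : Sph n) : Euc n) := by
      show x = ‖x‖ • (‖x‖⁻¹ • x)
      rw [smul_smul, mul_inv_cancel₀ (ne_of_gt hx0), one_smul]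
    rw [hxeq]
    exact Set.smul_mem_smul hxW ⟨uy, hus, rfl⟩
  have hvolO : 0 < volume O := hOopen.measure_pos volume hOne
  have happ := volume.toSphere_apply' (E := Euc n) hs.measurableSet
  show 0 < volume.toSphere s
  rw [happ]
  have hdim : (Module.finrank ℝ (Euc n)) = n := finrank_euclideanSpace_fin
  refine ENNReal.mul_pos ?_ ?_
  · rw [hdim]
    exact_mod_cast Nat.cast_ne_zero.mpr (NeZero.ne n)
  · exact ne_of_gt (lt_of_lt_of_le hvolO (measure_mono hsub))

theorem zero_mem_interior_of (K : CBody n)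
    (hK : (interior (K : Set (Euc n))).Nonempty)
    (hI : ∫ u, supportFn n K u • (u : Euc n) ∂(sphMeasure n) = 0) :
    (0 : Euc n) ∈ interior (K : Set (Euc n)) := by
  by_contra h0
  obtain ⟨x₁, hx₁⟩ := hK
  obtain ⟨f, hf⟩ := geometric_hahn_banach_open_point (K.convex.interior) isOpen_interior h0
  have hf0 : ∀ a ∈ interior (K : Set (Euc n)), f a < 0 := by
    intro a ha
    simpa using hf a ha
  set v0 : Euc n := (InnerProductSpace.toDual ℝ (Euc n)).symm f with hv0
  have hv0app : ∀ x, ⟪v0, x⟫ = f x := fun x => InnerProductSpace.toDual_symm_apply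
  have hv0ne : v0 ≠ 0 := by
    intro h
    have h2 := hf0 x₁ hx₁
    rw [← hv0app x₁, h, inner_zero_left] at h2
    exact lt_irrefl 0 h2
  set v : Euc n := ‖v0‖⁻¹ • v0 with hv
  have hvnorm : ‖v‖ = 1 := norm_smul_inv_norm hv0ne
  have hintneg : ∀ x ∈ interior (K : Set (Euc n)), ⟪x, v⟫ ≤ 0 := by
    intro x hx
    have h1 : ⟪v0, x⟫ < 0 := by rw [hv0app]; exact hf0 x hx
    have h2 : ⟪x, v⟫ = ‖v0‖⁻¹ * ⟪v0, x⟫ := by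
      rw [hv, real_inner_smul_right, real_inner_comm]
    have h3 : (0:ℝ) ≤ ‖v0‖⁻¹ := by positivity
    rw [h2]
    exact mul_nonpos_of_nonneg_of_nonpos h3 h1.le
  have hcl : (K : Set (Euc n)) ⊆ closure (interior (K : Set (Euc n))) := by
    intro x hx
    have htend : Filter.Tendsto (fun m : ℕ => x + (1/(m+1) : ℝ) • (x₁ - x))
        Filter.atTop (nhds x) := by
      have h0' : Filter.Tendsto (fun m : ℕ => (1/(m+1) : ℝ)) Filter.atTop (nhds 0) :=
        tendsto_one_div_add_atTop_nhds_zero_nat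
      have h1' := (h0'.smul_const (x₁ - x)).const_add x
      simpa using h1'
    refine mem_closure_of_tendsto htend (Filter.Eventually.of_forall fun m => ?_)
    refine Convex.add_smul_sub_mem_interior K.convex hx hx₁ ⟨?_, ?_⟩
    · positivity
    · rw [div_le_one (by positivity)]
      linarith [Nat.cast_nonneg (α := ℝ) m]
  have hKneg : ∀ x ∈ (K : Set (Euc n)), ⟪x, v⟫ ≤ 0 := by
    intro x hx
    have hclosed : IsClosed {y : Euc n | ⟪y, v⟫ ≤ 0} :=
      isClosed_le (continuous_id.inner continuous_const) continuous_const
    exact closure_minimal (fun y hy => hintneg y hy) hclosed (hcl hx)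
  obtain ⟨ε, hε, hball⟩ := Metric.mem_nhds_iff.mp (mem_interior_iff_mem_nhds.mp hx₁)
  have hε'pos : 0 < ε/2 := by positivity
  have hlow : ∀ u : Sph n, ⟪x₁, (u:Euc n)⟫ + ε/2 ≤ supportFn n K u := by
    intro u
    have hun : ‖(u:Euc n)‖ = 1 := mem_sphere_zero_iff_norm.mp u.2
    have hmem : x₁ + (ε/2) • (u:Euc n) ∈ (K : Set (Euc n)) := by
      apply hball
      rw [mem_ball, dist_eq_norm]
      simp only [add_sub_cancel_left]
      rw [norm_smul, hun, Real.norm_eq_abs, abs_of_pos hε'pos]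
      linarith
    have h1 := le_supportFn K u hmem
    rw [inner_add_left, real_inner_smul_left, real_inner_self_eq_norm_mul_norm, hun] at h1
    linarith
  have hvmem : v ∈ Sph n := by rwa [mem_sphere_zero_iff_norm]
  have hsupv : supportFn n K ⟨v, hvmem⟩ ≤ 0 := supportFn_le K _ fun x hx => hKneg x hx
  set r := Submodule.reflection ((ℝ ∙ v)ᗮ) with hrdef
  have hrx : ∀ x : Euc n, r x = x - (2 * ⟪v, x⟫) • v := by
    intro x
    rw [hrdef, Submodule.reflection_orthogonal_apply, Submodule.reflection_singleton_apply, hvnorm]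
    push_cast
    rw [one_pow, div_one, two_smul, two_mul, add_smul]
    abel
  set rS : Sph n → Sph n := sphMap r with hrS
  have hrv : ((rS ⟨v, hvmem⟩ : Sph n) : Euc n) = -v :=
    Submodule.reflection_orthogonalComplement_singleton_eq_neg v
  have hvv : ⟪v, v⟫ = (1:ℝ) := by
    rw [real_inner_self_eq_norm_mul_norm, hvnorm]; norm_num
  have hrinner : ∀ u : Sph n, ⟪((rS u : Sph n) : Euc n), v⟫ = -⟪(u : Euc n), v⟫ := by
    intro u
    show ⟪r (u:Euc n), v⟫ = _
    rw [hrx, inner_sub_left, real_inner_smul_left, hvv,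
      real_inner_comm v (u:Euc n)]
    ring
  set h := supportFn n K with hh
  have hhcont : Continuous h := supportFn_continuous K
  have hrScont : Continuous rS := (sphHomeo r).continuous
  have hint1 : Integrable (fun u => h u • (u : Euc n)) (sphMeasure n) :=
    (hhcont.smul continuous_subtype_val).integrable_of_hasCompactSupport
      (HasCompactSupport.of_compactSpace _)
  have hG0 : ∫ u, h u * ⟪(u : Euc n), v⟫ ∂(sphMeasure n) = 0 := by
    have h1 := (innerSL ℝ v).integral_comp_comm hint1
    rw [hI] at h1
    simp only [map_zero] at h1
    have h2 : ∀ u : Sph n, (innerSL ℝ v) (h u • (u:Euc n)) = h u * ⟪(u:Euc n), v⟫ := by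
      intro u
      simp only [innerSL_apply_apply, real_inner_smul_right]
      rw [real_inner_comm]
    rw [← h1]
    exact integral_congr_ae (Filter.Eventually.of_forall fun u => (h2 u).symm)
  have hG0' : ∫ u, h (rS u) * ⟪(u : Euc n), v⟫ ∂(sphMeasure n) = 0 := by
    have hsub := integral_sphMap r (fun u => h u * ⟪(u : Euc n), v⟫)
    rw [hG0] at hsub
    have h3 : ∀ u : Sph n, h (rS u) * ⟪((rS u : Sph n):Euc n), v⟫
        = -(h (rS u) * ⟪(u:Euc n), v⟫) := by
      intro u; rw [hrinner u]; ring
    rw [integral_congr_ae (Filter.Eventually.of_forall h3), integral_neg] at hsub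
    linarith [hsub]
  have hφcont : Continuous (fun u : Sph n => (h u - h (rS u)) * ⟪(u : Euc n), v⟫) :=
    (hhcont.sub (hhcont.comp hrScont)).mul (continuous_subtype_val.inner continuous_const)
  have hφint : Integrable (fun u : Sph n => (h u - h (rS u)) * ⟪(u : Euc n), v⟫)
      (sphMeasure n) :=
    hφcont.integrable_of_hasCompactSupport (HasCompactSupport.of_compactSpace _)
  have hintG1 : Integrable (fun u : Sph n => h u * ⟪(u : Euc n), v⟫) (sphMeasure n) :=
    (hhcont.mul (continuous_subtype_val.inner continuous_const)).integrable_of_hasCompactSupport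
      (HasCompactSupport.of_compactSpace _)
  have hintG2 : Integrable (fun u : Sph n => h (rS u) * ⟪(u : Euc n), v⟫) (sphMeasure n) :=
    ((hhcont.comp hrScont).mul
      (continuous_subtype_val.inner continuous_const)).integrable_of_hasCompactSupport
      (HasCompactSupport.of_compactSpace _)
  have hφ0 : ∫ u, (h u - h (rS u)) * ⟪(u : Euc n), v⟫ ∂(sphMeasure n) = 0 := by
    have h4 : ∀ u : Sph n, (h u - h (rS u)) * ⟪(u : Euc n), v⟫
        = h u * ⟪(u:Euc n), v⟫ - h (rS u) * ⟪(u:Euc n), v⟫ := fun u => by ring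
    rw [integral_congr_ae (Filter.Eventually.of_forall h4), integral_sub hintG1 hintG2,
      hG0, hG0', sub_zero]
  have hdec : ∀ u : Sph n, (u : Euc n) = ((rS u : Sph n) : Euc n) + (2 * ⟪v, (u:Euc n)⟫) • v := by
    intro u
    show _ = r (u:Euc n) + _
    rw [hrx]
    abel
  have hφnonpos : ∀ u : Sph n, (h u - h (rS u)) * ⟪(u : Euc n), v⟫ ≤ 0 := by
    intro u
    have hvu : ⟪v, (u:Euc n)⟫ = ⟪(u:Euc n), v⟫ := real_inner_comm _ _
    rcases le_or_gt 0 ⟪(u:Euc n), v⟫ with ht | ht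
    · have hle : h u ≤ h (rS u) := by
        refine supportFn_le K u fun x hx => ?_
        have e1 : ⟪x, (u:Euc n)⟫
            = ⟪x, ((rS u : Sph n):Euc n)⟫ + (2*⟪v,(u:Euc n)⟫) * ⟪x, v⟫ := by
          conv_lhs => rw [hdec u]
          rw [inner_add_right, real_inner_smul_right]
        have e2 : (2*⟪v,(u:Euc n)⟫) * ⟪x, v⟫ ≤ 0 :=
          mul_nonpos_of_nonneg_of_nonpos (by rw [hvu]; linarith) (hKneg x hx)
        have e3 := le_supportFn K (rS u) hx
        rw [e1]
        linarith
      exact mul_nonpos_of_nonpos_of_nonneg (by linarith) ht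
    · have hle : h (rS u) ≤ h u := by
        refine supportFn_le K (rS u) fun x hx => ?_
        have e1 : ⟪x, ((rS u : Sph n):Euc n)⟫
            = ⟪x, (u:Euc n)⟫ - (2*⟪v,(u:Euc n)⟫) * ⟪x, v⟫ := by
          have e0 : ((rS u : Sph n):Euc n) = (u:Euc n) - (2*⟪v,(u:Euc n)⟫) • v := by
            show r (u:Euc n) = _
            rw [hrx]
          rw [e0, inner_sub_right, real_inner_smul_right]
        have e2 : 0 ≤ (2*⟪v,(u:Euc n)⟫) * ⟪x, v⟫ :=
          mul_nonneg_iff.mpr (Or.inr ⟨by rw [hvu]; linarith, hKneg x hx⟩)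
        have e3 := le_supportFn K u hx
        rw [e1]
        linarith
      exact mul_nonpos_of_nonneg_of_nonpos (by linarith) ht.le
  have hφvS : (h ⟨v, hvmem⟩ - h (rS ⟨v, hvmem⟩)) * ⟪((⟨v, hvmem⟩ : Sph n) : Euc n), v⟫
      ≤ -(ε/2) := by
    have h2 : ε/2 ≤ h (rS ⟨v, hvmem⟩) := by
      have ha := hlow (rS ⟨v, hvmem⟩)
      rw [hrv, inner_neg_right] at ha
      have hb := hlow ⟨v, hvmem⟩
      have hc : supportFn n K ⟨v, hvmem⟩ ≤ 0 := hsupv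
      show (ε:ℝ)/2 ≤ supportFn n K (rS ⟨v, hvmem⟩)
      have hd : ⟪x₁, v⟫ ≤ -(ε/2) := by
        have : ⟪x₁, ((⟨v, hvmem⟩ : Sph n) : Euc n)⟫ + ε/2 ≤ supportFn n K ⟨v, hvmem⟩ := hb
        linarith [this]
      linarith
    have h1 : h ⟨v, hvmem⟩ ≤ 0 := hsupv
    have h3 : ⟪((⟨v, hvmem⟩ : Sph n) : Euc n), v⟫ = 1 := hvv
    rw [h3, mul_one]
    linarith
  have hae := (integral_eq_zero_iff_of_nonneg
    (fun u : Sph n => neg_nonneg.mpr (hφnonpos u)) hφint.neg).mp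
    (by rw [integral_neg, hφ0, neg_zero])
  set N : Set (Sph n) := (fun u : Sph n => (h u - h (rS u)) * ⟪(u : Euc n), v⟫) ⁻¹'
    (Set.Iio 0) with hN
  have hNopen : IsOpen N := isOpen_Iio.preimage hφcont
  have hNne : N.Nonempty := ⟨⟨v, hvmem⟩, by
    show (h ⟨v, hvmem⟩ - h (rS ⟨v, hvmem⟩)) * ⟪((⟨v, hvmem⟩ : Sph n) : Euc n), v⟫ < 0
    linarith⟩
  have hNpos := sphMeasure_pos_of_isOpen hNopen hNne
  have hNzero : sphMeasure n N = 0 := by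
    have h5 : sphMeasure n
        {u : Sph n | ¬ (-((h u - h (rS u)) * ⟪(u:Euc n), v⟫) = 0)} = 0 := by
      refine ae_iff.mp (hae.mono fun u hu => ?_)
      simpa using hu
    refine measure_mono_null (fun u hu => ?_) h5
    have h6 : (h u - h (rS u)) * ⟪(u:Euc n), v⟫ < 0 := hu
    simp only [Set.mem_setOf_eq]
    intro hcontra
    linarith [neg_eq_zero.mp hcontra]
  exact absurd hNzero (ne_of_gt hNpos)

end Aux

/-- For a Blaschke Minkowski homomorphism Φ, with mixed operator
h(Φ(K_1,…,K_{n-1}),·) = S(K_1,…,K_{n-1},·) ∗ g (g zonal, g(u) = ḡ(⟨u,e⟩), and the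
mixed surface area measures having center of mass at the origin), the Steiner point
of the mixed body is the origin: s(Φ(K_1,…,K_{n-1})) = o; consequently the origin
is an interior point of Φ(K_1,…,K_{n-1}). -/
theorem stmt10 (n : ℕ) (hn : 3 ≤ n) [NeZero n]
    (gbar : ℝ → ℝ) (hg : Continuous gbar)  -- zonal generating function
    (Sm : (Fin (n - 1) → CBody n) → Measure (Sph n))  -- mixed surface area measures
    (hSfin : ∀ F, IsFiniteMeasure (Sm F))
    (hcenter : ∀ F, ∫ u, ((u : Euc n)) ∂(Sm F) = 0)
    (Φm : (Fin (n - 1) → CBody n) → CBody n)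
    (hΦ : ∀ (F : Fin (n - 1) → CBody n) (v : Sph n),
      supportFn n (Φm F) v = ∫ u, gbar ⟪(u : Euc n), (v : Euc n)⟫ ∂(Sm F))
    (hint : ∀ F, (interior (Φm F : Set (Euc n))).Nonempty)
    (F : Fin (n - 1) → CBody n) :
    steinerPoint n (Φm F) = 0 ∧ (0 : Euc n) ∈ interior (Φm F : Set (Euc n)) := by
  haveI := hSfin F
  have hIzero : ∫ u, supportFn n (Φm F) u • (u : Euc n) ∂(sphMeasure n) = 0 :=
    integral_supp_zero gbar hg (Sm F) (hcenter F) _ (hΦ F)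
  constructor
  · rw [steinerPoint, hIzero, smul_zero, smul_zero]
  · exact zero_mem_interior_of (Φm F) (hint F) hIzero
end
end

section
/- Let Ψ be a nontrivial radial Blaschke Minkowski homomorphism on star bodies in R^n. For star bodies L_1,...,L_{n-1}, 2 ≤ m ≤ n-1, and 0 ≤ i ≤ n-1: W̃_i(Ψ(L_1,...,L_{n-1}))^m ≤ ∏_{j=1}^m W̃_i(Ψ(L_j,...,L_j, L_{m+1},...,L_{n-1})) (with L_j appearing m times in the j-th factor), with equality if and only if L_1,...,L_m are dilates. -/
open MeasureTheory Metric
open scoped RealInnerProductSpace ENNReal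

noncomputable section

/-- A star body (with respect to the origin) in ℝⁿ, described by its continuous
positive radial function on the unit sphere. -/
structure StarBody (n : ℕ) where
  radial : C(Sph n, ℝ)
  pos : ∀ u, 0 < radial u

/-- Two star bodies are dilates if their radial functions are proportional. -/
def Dilates (n : ℕ) (K L : StarBody n) : Prop :=
  ∃ c : ℝ, 0 < c ∧ ∀ u, K.radial u = c * L.radial u

/-- The i-th dual quermassintegral W̃_i(L) = (1/n) ∫ ρ(L,u)^{n-i} du. -/
def dualQuermass (n : ℕ) [NeZero n] (i : ℕ) (L : StarBody n) : ℝ :=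
  (1 / n : ℝ) * ∫ u, L.radial u ^ (n - i) ∂(sphMeasure n)

section AuxAMGM

variable {m : ℕ}

lemma rt_pow {a : ℝ} (hm : m ≠ 0) (ha : 0 ≤ a) : (a ^ ((m : ℝ)⁻¹)) ^ m = a := by
  rw [← Real.rpow_natCast (a ^ ((m : ℝ)⁻¹)) m, ← Real.rpow_mul ha,
    inv_mul_cancel₀ (by exact_mod_cast hm), Real.rpow_one]

lemma pow_rt {a : ℝ} (hm : m ≠ 0) (ha : 0 ≤ a) : ((a ^ m : ℝ)) ^ ((m : ℝ)⁻¹) = a := by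
  rw [← Real.rpow_natCast a m, ← Real.rpow_mul ha,
    mul_inv_cancel₀ (by exact_mod_cast hm), Real.rpow_one]

lemma pow_left_inj' {a b : ℝ} (hm : m ≠ 0) (ha : 0 ≤ a) (hb : 0 ≤ b)
    (h : a ^ m = b ^ m) : a = b := by
  have := congrArg (fun z : ℝ => z ^ ((m : ℝ)⁻¹)) h
  simpa [pow_rt hm ha, pow_rt hm hb] using this

/-- From `a ^ p = c * b ^ p` extract `a = c ^ (1/p) * b`. -/
lemma root_scale {p : ℕ} {a b c : ℝ} (hp : p ≠ 0) (ha : 0 ≤ a) (hb : 0 ≤ b) (hc : 0 ≤ c)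
    (h : a ^ p = c * b ^ p) : a = c ^ ((p : ℝ)⁻¹) * b := by
  have h1 : (a ^ p : ℝ) ^ ((p : ℝ)⁻¹) = (c * b ^ p) ^ ((p : ℝ)⁻¹) := by rw [h]
  rwa [pow_rt hp ha, Real.mul_rpow hc (by positivity), pow_rt hp hb] at h1

lemma amgm (hm : m ≠ 0) (x : Fin m → ℝ) (hx : ∀ j, 0 ≤ x j) :
    ∏ j, x j ^ ((m : ℝ)⁻¹) ≤ (∑ j, x j) / m := by
  have h := Real.geom_mean_le_arith_mean_weighted Finset.univ (fun _ => (m : ℝ)⁻¹) x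
    (fun _ _ => by positivity) (by
      simp [Finset.sum_const, Finset.card_univ]
      field_simp) (fun j _ => hx j)
  calc ∏ j, x j ^ ((m : ℝ)⁻¹) ≤ ∑ j, (m : ℝ)⁻¹ * x j := h
    _ = (∑ j, x j) / m := by rw [← Finset.mul_sum]; ring

lemma amgm_eq (hm : m ≠ 0) (x : Fin m → ℝ) (hx : ∀ j, 0 < x j)
    (h : ∏ j, x j ^ ((m : ℝ)⁻¹) = (∑ j, x j) / m) : ∀ j k, x j = x k := by
  have hm' : ((m : ℝ)) ≠ 0 := by exact_mod_cast hm
  have hsum : ∑ j, (m : ℝ)⁻¹ • x j = (∑ j, x j) / m := by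
    simp only [smul_eq_mul, ← Finset.mul_sum]; ring
  have hlog : Real.log ((∑ j, x j) / m) = ∑ j, (m : ℝ)⁻¹ • Real.log (x j) := by
    rw [← h, Real.log_prod (fun j _ => ne_of_gt (Real.rpow_pos_of_pos (hx j) _))]
    refine Finset.sum_congr rfl fun j _ => ?_
    rw [Real.log_rpow (hx j)]; simp [smul_eq_mul, mul_comm]
  have key := strictConcaveOn_log_Ioi.eq_of_map_sum_eq
    (t := Finset.univ) (w := fun _ : Fin m => (m : ℝ)⁻¹) (p := x)
    (fun _ _ => by positivity)
    (by simp [Finset.sum_const, Finset.card_univ]; field_simp)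
    (fun j _ => Set.mem_Ioi.mpr (hx j))
    (by rw [hsum, hlog])
  exact fun j k => key (Finset.mem_univ j) (Finset.mem_univ k)


lemma prod_root {m : ℕ} (hm : m ≠ 0) (b : Fin m → ℝ) (hb : ∀ j, 0 ≤ b j) {G : ℝ} (hG : 0 ≤ G) :
    ∏ j, ((b j ^ m) * G) ^ ((m : ℝ)⁻¹) = (∏ j, b j) * G := by
  have hfac : ∀ j, ((b j ^ m) * G) ^ ((m : ℝ)⁻¹) = b j * G ^ ((m : ℝ)⁻¹) := fun j => by
    rw [Real.mul_rpow (pow_nonneg (hb j) m) hG, pow_rt hm (hb j)]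
  rw [Finset.prod_congr rfl (fun j _ => hfac j), Finset.prod_mul_distrib, Finset.prod_const,
    Finset.card_univ, Fintype.card_fin, rt_pow hm hG]

end AuxAMGM

section SphereFacts

open scoped Pointwise

variable (n : ℕ) [NeZero n]

instance : IsFiniteMeasure (sphMeasure n) := by unfold sphMeasure; infer_instance

lemma sphMeasure_ne_zero : sphMeasure n ≠ 0 := by
  intro h
  have h1 : sphMeasure n Set.univ = 0 := by rw [h]; rfl
  rw [sphMeasure, Measure.toSphere_apply_univ] at h1
  have hn : (Module.finrank ℝ (Euc n) : ℝ≥0∞) ≠ 0 := by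
    simp [finrank_euclideanSpace_fin, NeZero.ne n]
  exact (mul_ne_zero hn (measure_ball_pos volume (0 : Euc n) one_pos).ne') h1

instance sphOpenPos : (sphMeasure n).IsOpenPosMeasure := by
  constructor
  intro U hU hne
  obtain ⟨x₀, hx₀⟩ := hne
  obtain ⟨V, hVopen, hVU⟩ := isOpen_induced_iff.mp hU
  rw [sphMeasure, Measure.toSphere_apply' _ hU.measurableSet]
  set W : Set (Euc n) :=
    ({y | y ≠ 0} ∩ ((fun y : Euc n => ‖y‖⁻¹ • y) ⁻¹' V)) ∩ Metric.ball 0 1 with hW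
  have hWopen : IsOpen W := by
    refine IsOpen.inter (ContinuousOn.isOpen_inter_preimage ?_ ?_ hVopen) isOpen_ball
    · exact ContinuousOn.smul
        ((continuous_norm.continuousOn).inv₀ fun y hy => norm_ne_zero_iff.2 hy)
        continuousOn_id
    · exact isOpen_ne
  have hx₀n : ‖(x₀ : Euc n)‖ = 1 := mem_sphere_zero_iff_norm.mp x₀.2
  have hWne : W.Nonempty := by
    refine ⟨(2⁻¹ : ℝ) • (x₀ : Euc n), ⟨⟨?_, ?_⟩, ?_⟩⟩
    · intro h0
      have : ‖(2⁻¹ : ℝ) • (x₀ : Euc n)‖ = 2⁻¹ := by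
        rw [norm_smul, hx₀n]; norm_num
      rw [h0, norm_zero] at this; norm_num at this
    · show ‖(2⁻¹ : ℝ) • (x₀ : Euc n)‖⁻¹ • ((2⁻¹ : ℝ) • (x₀ : Euc n)) ∈ V
      have h2 : ‖(2⁻¹ : ℝ) • (x₀ : Euc n)‖ = 2⁻¹ := by
        rw [norm_smul, hx₀n]; norm_num
      rw [h2, smul_smul]
      norm_num
      rw [← hVU] at hx₀; exact hx₀
    · rw [mem_ball_zero_iff, norm_smul, hx₀n]; norm_num
  have hWsub : W ⊆ Set.Ioo (0 : ℝ) 1 • (Subtype.val '' U) := by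
    rintro y ⟨⟨hy0, hyV⟩, hyb⟩
    have hyn : 0 < ‖y‖ := norm_pos_iff.mpr hy0
    have hbs : ‖(‖y‖⁻¹ • y : Euc n)‖ = 1 := by
      rw [norm_smul, norm_inv, norm_norm, inv_mul_cancel₀ hyn.ne']
    have hmem : (‖y‖⁻¹ • y : Euc n) ∈ Subtype.val '' U :=
      ⟨⟨‖y‖⁻¹ • y, mem_sphere_zero_iff_norm.mpr hbs⟩, by rw [← hVU]; exact hyV, rfl⟩
    have hy' : y = ‖y‖ • (‖y‖⁻¹ • y) := by
      rw [smul_smul, mul_inv_cancel₀ hyn.ne', one_smul]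
    rw [hy']
    exact Set.smul_mem_smul ⟨hyn, mem_ball_zero_iff.mp hyb⟩ hmem
  have hn : (Module.finrank ℝ (Euc n) : ℝ≥0∞) ≠ 0 := by
    simp [finrank_euclideanSpace_fin, NeZero.ne n]
  exact mul_ne_zero hn fun h0 =>
    (hWopen.measure_ne_zero volume hWne) (measure_mono_null hWsub h0)

variable {n}

lemma exists_pos_point (μ : Measure (Sph n)) (hμ : μ ≠ 0) :
    ∃ u₀ : Sph n, ∀ U : Set (Sph n), IsOpen U → u₀ ∈ U → μ U ≠ 0 := by
  by_contra hcon
  push_neg at hcon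
  choose U hUo hUm hU0 using hcon
  obtain ⟨t, ht⟩ := isCompact_univ.elim_finite_subcover U hUo
    (fun u _ => Set.mem_iUnion.mpr ⟨u, hUm u⟩)
  have h0 : μ (⋃ u ∈ t, U u) = 0 :=
    (measure_biUnion_null_iff t.countable_toSet).mpr fun u _ => hU0 u
  exact hμ (Measure.measure_univ_eq_zero.mp (measure_mono_null ht h0))

lemma eq_at_pos_point {μ : Measure (Sph n)} {f g : Sph n → ℝ} (hf : Continuous f)
    (hg : Continuous g) (h : f =ᵐ[μ] g) {u₀ : Sph n}
    (hu₀ : ∀ U : Set (Sph n), IsOpen U → u₀ ∈ U → μ U ≠ 0) : f u₀ = g u₀ := by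
  by_contra hne
  have hopen : IsOpen {x : Sph n | f x ≠ g x} := isOpen_ne_fun hf hg
  have h0 : μ {x : Sph n | f x ≠ g x} = 0 := by
    simpa [Filter.EventuallyEq, ae_iff] using h
  exact hu₀ _ hopen hne h0

lemma contInt {ν : Measure (Sph n)} [IsFiniteMeasure ν] {f : Sph n → ℝ} (hf : Continuous f) :
    Integrable f ν :=
  hf.integrable_of_hasCompactSupport (HasCompactSupport.of_compactSpace f)

lemma intpos {ν : Measure (Sph n)} [IsFiniteMeasure ν] (hν : ν ≠ 0) {f : Sph n → ℝ}
    (hf : Continuous f) (hp : ∀ u, 0 < f u) : 0 < ∫ u, f u ∂ν := by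
  rw [integral_pos_iff_support_of_nonneg_ae (Filter.Eventually.of_forall fun u => (hp u).le)
    (contInt hf)]
  have hs : Function.support f = Set.univ := Set.eq_univ_of_forall fun u => (hp u).ne'
  rw [hs]
  exact Measure.measure_univ_pos.mpr hν

end SphereFacts

section Core

variable {n : ℕ} [NeZero n] {m : ℕ}

lemma core_lemma (hm : m ≠ 0) (ν : Measure (Sph n)) [IsFiniteMeasure ν] (hν : ν ≠ 0)
    (F : Fin m → Sph n → ℝ) (hFc : ∀ j, Continuous (F j)) (hFp : ∀ j u, 0 < F j u) :
    (∫ u, ∏ j, F j u ^ ((m : ℝ)⁻¹) ∂ν) ^ m ≤ ∏ j, ∫ u, F j u ∂ν ∧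
    ((∫ u, ∏ j, F j u ^ ((m : ℝ)⁻¹) ∂ν) ^ m = ∏ j, ∫ u, F j u ∂ν →
      ∀ᵐ u ∂ν, ∀ j k, (∫ u', F k u' ∂ν) * F j u = (∫ u', F j u' ∂ν) * F k u) := by
  have hmR : ((m : ℝ)) ≠ 0 := Nat.cast_ne_zero.mpr hm
  set a : Fin m → ℝ := fun j => ∫ u, F j u ∂ν with ha_def
  have ha : ∀ j, 0 < a j := fun j => intpos hν (hFc j) (hFp j)
  set C : ℝ := ∏ j, a j ^ ((m : ℝ)⁻¹) with hC_def
  have hC : 0 < C := Finset.prod_pos fun j _ => Real.rpow_pos_of_pos (ha j) _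
  set P : Sph n → ℝ := fun u => ∏ j, F j u ^ ((m : ℝ)⁻¹) with hP_def
  have hPc : Continuous P := continuous_finset_prod _ fun j _ =>
    (hFc j).rpow_const (fun u => Or.inr (by positivity))
  have hPnn : ∀ u, 0 ≤ P u := fun u =>
    Finset.prod_nonneg fun j _ => Real.rpow_nonneg (hFp j u).le _
  set Q : Sph n → ℝ := fun u => C * ((∑ j, F j u / a j) / m) with hQ_def
  have hQc : Continuous Q := continuous_const.mul
    ((continuous_finset_sum _ fun j _ => (hFc j).div_const _).div_const _)
  have h2 : ∀ u, ∏ j, (F j u / a j) ^ ((m : ℝ)⁻¹) = P u / C := by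
    intro u
    rw [hP_def, hC_def, ← Finset.prod_div_distrib]
    exact Finset.prod_congr rfl fun j _ => Real.div_rpow (hFp j u).le (ha j).le _
  have hkey : ∀ u, P u ≤ Q u := by
    intro u
    have h1 := amgm hm (fun j => F j u / a j) (fun j => (div_pos (hFp j u) (ha j)).le)
    rw [h2 u] at h1
    have := (div_le_iff₀ hC).mp h1
    rw [hQ_def]
    calc P u ≤ (∑ j, F j u / a j) / m * C := this
      _ = C * ((∑ j, F j u / a j) / m) := by ring
  have hPint : Integrable P ν := contInt hPc
  have hQint : Integrable Q ν := contInt hQc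
  have hQval : ∫ u, Q u ∂ν = C := by
    rw [hQ_def, integral_const_mul, integral_div,
      integral_finset_sum _ (fun j _ => (contInt (hFc j)).div_const _)]
    have : ∀ j : Fin m, ∫ u, F j u / a j ∂ν = 1 := fun j => by
      rw [integral_div]; exact div_self (ha j).ne'
    simp only [this, Finset.sum_const, Finset.card_univ, Fintype.card_fin, nsmul_eq_mul, mul_one]
    field_simp
  have hIle : ∫ u, P u ∂ν ≤ C := by
    rw [← hQval]; exact integral_mono hPint hQint hkey
  have hCm : C ^ m = ∏ j, a j := by
    rw [hC_def, ← Finset.prod_pow]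
    exact Finset.prod_congr rfl fun j _ => rt_pow hm (ha j).le
  have hInn : 0 ≤ ∫ u, P u ∂ν := integral_nonneg hPnn
  constructor
  · rw [← hCm]; exact pow_le_pow_left₀ hInn hIle m
  · intro h
    have hIP : ∫ u, P u ∂ν = C := pow_left_inj' hm hInn hC.le (by rw [hCm]; exact h)
    have hze : ∫ u, (Q u - P u) ∂ν = 0 := by
      rw [integral_sub hQint hPint, hQval, hIP, sub_self]
    have hae : (fun u => Q u - P u) =ᵐ[ν] 0 :=
      (integral_eq_zero_iff_of_nonneg (fun u => sub_nonneg.mpr (hkey u))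
        (hQint.sub hPint)).mp hze
    filter_upwards [hae] with u hu j k
    have huq : Q u = P u := by
      have : Q u - P u = 0 := hu
      linarith
    have hPC : P u / C = (∑ j, F j u / a j) / m := by
      rw [← huq, hQ_def]
      field_simp
    have heq := amgm_eq hm (fun j => F j u / a j) (fun j => div_pos (hFp j u) (ha j))
      (by rw [h2 u, hPC])
    have hjk := (div_eq_div_iff (ha j).ne' (ha k).ne').mp (heq j k)
    linarith
end Core


/-- Dual Aleksandrov–Fenchel inequality for a nontrivial radial Blaschke Minkowski
homomorphism Ψ (represented by a nonzero nonnegative zonal measure μ, with mixed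
operator ρ(Ψ(L_1,…,L_{n-1}),·) = (ρ(L_1,·)⋯ρ(L_{n-1},·)) ∗ μ):  for 2 ≤ m ≤ n-1 and
0 ≤ i ≤ n-1, W̃_i(Ψ(L_1,…,L_{n-1}))^m ≤ ∏_{j=1}^m W̃_i(Ψ(L_j,…,L_j,L_{m+1},…,L_{n-1})),
with equality iff L_1,…,L_m are dilates. -/
theorem stmt18 (n m i : ℕ) (hn : 3 ≤ n) [NeZero n]
    (hm : 2 ≤ m) (hmn : m ≤ n - 1) (hi : i ≤ n - 1)
    (G : Type*) [Group G] [TopologicalSpace G] [IsTopologicalGroup G]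
    [MeasurableSpace G] [BorelSpace G]
    (act : G → Sph n → Sph n)
    (hact_one : ∀ u, act 1 u = u)
    (hact_mul : ∀ η τ u, act (η * τ) u = act η (act τ u))
    (hact_cont : Continuous fun p : G × Sph n => act p.1 p.2)
    (e : Sph n)
    (htrans : ∀ u : Sph n, ∃ η : G, act η e = u)
    (hinv : ∀ ϑ : G, (sphMeasure n).map (act ϑ) = sphMeasure n)
    (μ : Measure (Sph n)) [IsFiniteMeasure μ] (hμne : μ ≠ 0)
    (hzonal : ∀ ϑ : G, act ϑ e = e → μ.map (act ϑ) = μ)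
    (Ψm : (Fin (n - 1) → StarBody n) → StarBody n)
    (hrep : ∀ (F : Fin (n - 1) → StarBody n) (η : G),
      (Ψm F).radial (act η e) = ∫ u, ∏ k, (F k).radial (act η u) ∂μ)
    (L : Fin (n - 1) → StarBody n) :
    dualQuermass n i (Ψm L) ^ m ≤
      ∏ j : Fin m, dualQuermass n i
        (Ψm fun k => if (k : ℕ) < m then L (Fin.castLE hmn j) else L k) ∧
    (dualQuermass n i (Ψm L) ^ m =
      ∏ j : Fin m, dualQuermass n i
        (Ψm fun k => if (k : ℕ) < m then L (Fin.castLE hmn j) else L k) ↔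
      ∀ j k : Fin m, Dilates n (L (Fin.castLE hmn j)) (L (Fin.castLE hmn k))) := by
  classical
  have hm0 : m ≠ 0 := by omega
  haveI : NeZero m := ⟨hm0⟩
  have hp0 : n - i ≠ 0 := by omega
  set p : ℕ := n - i with hp_def
  have hnR : (0 : ℝ) < 1 / n := by
    have : (0:ℝ) < n := by exact_mod_cast Nat.pos_of_ne_zero (NeZero.ne n)
    positivity
  -- reindexing products over the first m coordinates
  have reindex : ∀ f : Fin (n-1) → ℝ,
      ∏ k ∈ Finset.univ.filter (fun k : Fin (n-1) => (k : ℕ) < m), f k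
        = ∏ j : Fin m, f (Fin.castLE hmn j) := by
    intro f
    refine (Finset.prod_bij (fun (j : Fin m) (_ : j ∈ Finset.univ) => Fin.castLE hmn j)
      ?_ ?_ ?_ ?_).symm
    · intro j _
      simp only [Finset.mem_filter, Finset.mem_univ, true_and]
      exact j.isLt
    · intro j _ k _ hjk
      exact Fin.castLE_injective hmn hjk
    · intro k hk
      exact ⟨⟨(k : ℕ), (Finset.mem_filter.mp hk).2⟩, Finset.mem_univ _, by ext; simp⟩
    · intro j _; rfl
  set Fm : Fin m → Fin (n-1) → StarBody n :=
    fun j k => if (k : ℕ) < m then L (Fin.castLE hmn j) else L k with hFm_def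
  set ρ : Sph n → ℝ := fun v => (Ψm L).radial v with hρ_def
  set h : Fin m → Sph n → ℝ := fun j v => (Ψm (Fm j)).radial v with hh_def
  have hρc : Continuous ρ := (Ψm L).radial.continuous
  have hρp : ∀ v, 0 < ρ v := (Ψm L).pos
  have hhc : ∀ j, Continuous (h j) := fun j => (Ψm (Fm j)).radial.continuous
  have hhp : ∀ j v, 0 < h j v := fun j => (Ψm (Fm j)).pos
  set Gf : Sph n → ℝ :=
    fun x => ∏ k ∈ Finset.univ.filter (fun k : Fin (n-1) => ¬ (k : ℕ) < m), (L k).radial x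
    with hGf_def
  have hGfp : ∀ x, 0 < Gf x := fun x => Finset.prod_pos fun k _ => (L k).pos x
  have hGfc : Continuous Gf := continuous_finset_prod _ fun k _ => (L k).radial.continuous
  have split1 : ∀ x, ∏ k, (L k).radial x
      = (∏ j : Fin m, (L (Fin.castLE hmn j)).radial x) * Gf x := by
    intro x
    rw [← reindex (fun k => (L k).radial x), hGf_def]
    exact (Finset.prod_filter_mul_prod_filter_not _ _ _).symm
  have split2 : ∀ (j : Fin m) x, ∏ k, ((Fm j) k).radial x
      = ((L (Fin.castLE hmn j)).radial x) ^ m * Gf x := by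
    intro j x
    rw [← Finset.prod_filter_mul_prod_filter_not Finset.univ
      (fun k : Fin (n-1) => (k : ℕ) < m) (fun k => ((Fm j) k).radial x)]
    congr 1
    · rw [reindex (fun k => ((Fm j) k).radial x)]
      have hval : ∀ j' : Fin m,
          ((Fm j) (Fin.castLE hmn j')).radial x = (L (Fin.castLE hmn j)).radial x := by
        intro j'
        simp only [hFm_def]
        rw [if_pos]
        exact j'.isLt
      rw [Finset.prod_congr rfl (fun j' _ => hval j'), Finset.prod_const, Finset.card_univ,
        Fintype.card_fin]
    · refine Finset.prod_congr rfl fun k hk => ?_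
      simp only [hFm_def]
      rw [if_neg (Finset.mem_filter.mp hk).2]
  have hactη : ∀ η : G, Continuous (act η) :=
    fun η => hact_cont.comp (continuous_const.prodMk continuous_id)
  have hsurj : ∀ u₀ v : Sph n, ∃ η : G, act η u₀ = v := by
    intro u₀ v
    obtain ⟨τ, hτ⟩ := htrans u₀
    obtain ⟨σ, hσ⟩ := htrans v
    refine ⟨σ * τ⁻¹, ?_⟩
    rw [← hτ, ← hact_mul, mul_assoc, inv_mul_cancel, mul_one, hσ]
  set Fν : G → Fin m → Sph n → ℝ :=
    fun η j u => ((L (Fin.castLE hmn j)).radial (act η u)) ^ m * Gf (act η u) with hFν_def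
  have hFνc : ∀ η j, Continuous (Fν η j) := fun η j =>
    (((L _).radial.continuous.comp (hactη η)).pow m).mul (hGfc.comp (hactη η))
  have hFνp : ∀ η j u, 0 < Fν η j u := fun η j u =>
    mul_pos (pow_pos ((L _).pos _) m) (hGfp _)
  have keyρ : ∀ η : G, ρ (act η e) = ∫ u, ∏ j, (Fν η j u) ^ ((m : ℝ)⁻¹) ∂μ := by
    intro η
    show (Ψm L).radial (act η e) = _
    rw [hrep L η]
    congr 1
    funext u
    rw [split1 (act η u),
      ← prod_root hm0 (fun j => (L (Fin.castLE hmn j)).radial (act η u))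
        (fun j => ((L _).pos _).le) (hGfp (act η u)).le]
  have keyh : ∀ (η : G) (j : Fin m), h j (act η e) = ∫ u, Fν η j u ∂μ := by
    intro η j
    show (Ψm (Fm j)).radial (act η e) = _
    rw [hrep (Fm j) η]
    congr 1
    funext u
    exact split2 j (act η u)
  have hcoreμ : ∀ η : G,
      (∫ u, ∏ j, (Fν η j u) ^ ((m : ℝ)⁻¹) ∂μ) ^ m ≤ ∏ j, ∫ u, Fν η j u ∂μ ∧
      ((∫ u, ∏ j, (Fν η j u) ^ ((m : ℝ)⁻¹) ∂μ) ^ m = ∏ j, ∫ u, Fν η j u ∂μ →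
        ∀ᵐ u ∂μ, ∀ j k, (∫ u', Fν η k u' ∂μ) * Fν η j u
          = (∫ u', Fν η j u' ∂μ) * Fν η k u) :=
    fun η => core_lemma hm0 μ hμne (Fν η) (hFνc η) (hFνp η)
  have hpt : ∀ v, ρ v ^ m ≤ ∏ j, h j v := by
    intro v
    obtain ⟨η, rfl⟩ := htrans v
    rw [keyρ η, Finset.prod_congr rfl (fun j (_ : j ∈ Finset.univ) => keyh η j)]
    exact (hcoreμ η).1
  have hptroot : ∀ v, ρ v ≤ ∏ j, (h j v) ^ ((m : ℝ)⁻¹) := by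
    intro v
    have h2 : ((ρ v ^ m : ℝ)) ^ ((m : ℝ)⁻¹) ≤ (∏ j, h j v) ^ ((m : ℝ)⁻¹) :=
      Real.rpow_le_rpow (pow_nonneg (hρp v).le m) (hpt v) (by positivity)
    rwa [pow_rt hm0 (hρp v).le,
      ← Real.finset_prod_rpow _ _ (fun j _ => (hhp j v).le) _] at h2
  set P : Sph n → ℝ := fun v => ∏ j, ((h j v) ^ p) ^ ((m : ℝ)⁻¹) with hP_def
  have hPc : Continuous P := continuous_finset_prod _ fun j _ =>
    ((hhc j).pow p).rpow_const (fun v => Or.inr (by positivity))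
  have hcoreS : (∫ v, P v ∂(sphMeasure n)) ^ m ≤ (∏ j, ∫ v, (h j v) ^ p ∂(sphMeasure n)) ∧
      ((∫ v, P v ∂(sphMeasure n)) ^ m = (∏ j, ∫ v, (h j v) ^ p ∂(sphMeasure n)) →
        ∀ᵐ v ∂(sphMeasure n), ∀ j k,
          (∫ v', (h k v') ^ p ∂(sphMeasure n)) * (h j v) ^ p
            = (∫ v', (h j v') ^ p ∂(sphMeasure n)) * (h k v) ^ p) := by
    simpa using core_lemma hm0 (sphMeasure n) (sphMeasure_ne_zero n)
      (fun j v => (h j v) ^ p) (fun j => (hhc j).pow p) (fun j v => pow_pos (hhp j v) p)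
  have hcomm : ∀ (x : ℝ), 0 ≤ x → (x ^ ((m:ℝ)⁻¹)) ^ p = (x ^ p) ^ ((m:ℝ)⁻¹) := by
    intro x hx
    rw [← Real.rpow_natCast (x ^ ((m:ℝ)⁻¹)) p, ← Real.rpow_mul hx, mul_comm,
      Real.rpow_mul hx, Real.rpow_natCast]
  have hρP : ∀ v, ρ v ^ p ≤ P v := by
    intro v
    have h2 : ρ v ^ p ≤ (∏ j, (h j v) ^ ((m : ℝ)⁻¹)) ^ p :=
      pow_le_pow_left₀ (hρp v).le (hptroot v) p
    refine h2.trans_eq ?_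
    rw [← Finset.prod_pow]
    exact Finset.prod_congr rfl fun j _ => hcomm _ (hhp j v).le
  have hWdef : dualQuermass n i (Ψm L) = (1/n : ℝ) * ∫ v, ρ v ^ p ∂(sphMeasure n) := rfl
  have hWjdef : ∀ j : Fin m,
      dualQuermass n i (Ψm fun k => if (k : ℕ) < m then L (Fin.castLE hmn j) else L k)
        = (1/n : ℝ) * ∫ v, (h j v) ^ p ∂(sphMeasure n) := fun j => rfl
  have hWT : (∫ v, ρ v ^ p ∂(sphMeasure n)) ≤ ∫ v, P v ∂(sphMeasure n) :=
    integral_mono (contInt (hρc.pow p)) (contInt hPc) hρP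
  have hWnn : 0 ≤ (1/n : ℝ) * ∫ v, ρ v ^ p ∂(sphMeasure n) :=
    mul_nonneg hnR.le (integral_nonneg fun v => pow_nonneg (hρp v).le p)
  have hTnn : 0 ≤ (1/n : ℝ) * ∫ v, P v ∂(sphMeasure n) :=
    mul_nonneg hnR.le (integral_nonneg fun v => Finset.prod_nonneg fun j _ => Real.rpow_nonneg (pow_nonneg (hhp j v).le p) _)
  have hstep2 : ((1/n : ℝ) * ∫ v, P v ∂(sphMeasure n)) ^ m
      ≤ ∏ j : Fin m, ((1/n : ℝ) * ∫ v, (h j v) ^ p ∂(sphMeasure n)) := by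
    rw [mul_pow, Finset.prod_mul_distrib, Finset.prod_const, Finset.card_univ,
      Fintype.card_fin]
    exact mul_le_mul_of_nonneg_left hcoreS.1 (by positivity)
  have hstep1 : ((1/n : ℝ) * ∫ v, ρ v ^ p ∂(sphMeasure n)) ^ m
      ≤ ((1/n : ℝ) * ∫ v, P v ∂(sphMeasure n)) ^ m :=
    pow_le_pow_left₀ hWnn (mul_le_mul_of_nonneg_left hWT hnR.le) m
  have hineq : dualQuermass n i (Ψm L) ^ m ≤
      ∏ j : Fin m, dualQuermass n i
        (Ψm fun k => if (k : ℕ) < m then L (Fin.castLE hmn j) else L k) := by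
    rw [hWdef, Finset.prod_congr rfl (fun j (_ : j ∈ Finset.univ) => hWjdef j)]
    exact hstep1.trans hstep2
  refine ⟨hineq, ?_, ?_⟩
  · -- equality → dilates
    intro heq
    rw [hWdef, Finset.prod_congr rfl (fun j (_ : j ∈ Finset.univ) => hWjdef j)] at heq
    have heq2 : ((1/n : ℝ) * ∫ v, P v ∂(sphMeasure n)) ^ m
        = ∏ j : Fin m, ((1/n : ℝ) * ∫ v, (h j v) ^ p ∂(sphMeasure n)) :=
      le_antisymm hstep2 (heq ▸ hstep1)
    have heq1 : ((1/n : ℝ) * ∫ v, ρ v ^ p ∂(sphMeasure n))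
        = ((1/n : ℝ) * ∫ v, P v ∂(sphMeasure n)) :=
      pow_left_inj' hm0 hWnn hTnn (by rw [heq, heq2])
    -- everywhere equality ρ^p = P
    have hintPρ : ∫ v, ρ v ^ p ∂(sphMeasure n) = ∫ v, P v ∂(sphMeasure n) :=
      mul_left_cancel₀ hnR.ne' heq1
    have haeρP : (fun v => ρ v ^ p) =ᵐ[sphMeasure n] P := by
      have hz : ∫ v, (P v - ρ v ^ p) ∂(sphMeasure n) = 0 := by
        rw [integral_sub (g := fun v => ρ v ^ p) (contInt hPc) (contInt (hρc.pow p)), hintPρ, sub_self]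
      have := (integral_eq_zero_iff_of_nonneg (fun v => sub_nonneg.mpr (hρP v))
        ((contInt hPc).sub (contInt (hρc.pow p)))).mp hz
      filter_upwards [this] with v hv
      have : P v - ρ v ^ p = 0 := hv
      linarith
    have hallρP : ∀ v, ρ v ^ p = P v := by
      have := (Continuous.ae_eq_iff_eq (sphMeasure n) (hρc.pow p) hPc).mp haeρP
      exact fun v => congrFun this v
    -- outer proportionality, everywhere
    have heqS : (∫ v, P v ∂(sphMeasure n)) ^ m = ∏ j, ∫ v, (h j v) ^ p ∂(sphMeasure n) := by
      have h1 : ((1/n : ℝ)) ^ m * (∫ v, P v ∂(sphMeasure n)) ^ m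
          = ((1/n : ℝ)) ^ m * ∏ j, ∫ v, (h j v) ^ p ∂(sphMeasure n) := by
        rw [← mul_pow, heq2, Finset.prod_mul_distrib, Finset.prod_const, Finset.card_univ,
          Fintype.card_fin]
      exact mul_left_cancel₀ (by positivity) h1
    have houter : ∀ (j k : Fin m) v,
        (∫ v', (h k v') ^ p ∂(sphMeasure n)) * (h j v) ^ p
          = (∫ v', (h j v') ^ p ∂(sphMeasure n)) * (h k v) ^ p := by
      intro j k
      have hae := hcoreS.2 heqS
      have haejk : (fun v => (∫ v', (h k v') ^ p ∂(sphMeasure n)) * (h j v) ^ p)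
          =ᵐ[sphMeasure n] (fun v => (∫ v', (h j v') ^ p ∂(sphMeasure n)) * (h k v) ^ p) := by
        filter_upwards [hae] with v hv using hv j k
      have := (Continuous.ae_eq_iff_eq (sphMeasure n)
        (continuous_const.mul ((hhc j).pow p)) (continuous_const.mul ((hhc k).pow p))).mp haejk
      exact fun v => congrFun this v
    set A : Fin m → ℝ := fun j => ∫ v', (h j v') ^ p ∂(sphMeasure n) with hA_def
    have hA : ∀ j, 0 < A j := fun j =>
      intpos (sphMeasure_ne_zero n) ((hhc j).pow p) (fun v => pow_pos (hhp j v) p)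
    -- h j = (A j / A 0)^(1/p) * h 0 everywhere
    have hprop : ∀ (j : Fin m) v, h j v = ((A j / A 0) ^ ((p : ℝ)⁻¹)) * h 0 v := by
      intro j v
      refine root_scale hp0 (hhp j v).le (hhp 0 v).le (div_nonneg (hA j).le (hA 0).le) ?_
      rw [div_mul_eq_mul_div, eq_div_iff (hA 0).ne']
      linear_combination houter j 0 v
    -- inner equality at every η
    have hptEq : ∀ v, ρ v ^ m = ∏ j, h j v := by
      intro v
      have h1 : ρ v ^ p = (∏ j, (h j v) ^ ((m : ℝ)⁻¹)) ^ p := by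
        rw [hallρP v, ← Finset.prod_pow]
        exact (Finset.prod_congr rfl fun j _ => hcomm _ (hhp j v).le).symm
      have h2 : ρ v = ∏ j, (h j v) ^ ((m : ℝ)⁻¹) :=
        pow_left_inj' hp0 (hρp v).le
          (Finset.prod_nonneg fun j _ => Real.rpow_nonneg (hhp j v).le _) h1
      rw [h2, ← Finset.prod_pow]
      exact Finset.prod_congr rfl fun j _ => rt_pow hm0 (hhp j v).le
    obtain ⟨u₀, hu₀⟩ := exists_pos_point μ hμne
    have hLprop : ∀ j : Fin m, ∃ c : ℝ, 0 < c ∧ ∀ w,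
        (L (Fin.castLE hmn j)).radial w = c * (L (Fin.castLE hmn 0)).radial w := by
      intro j
      set e_j : ℝ := (A j / A 0) ^ ((p : ℝ)⁻¹) with he_def
      have he_pos : 0 < e_j := Real.rpow_pos_of_pos (div_pos (hA j) (hA 0)) _
      have hmain : ∀ w, ((L (Fin.castLE hmn j)).radial w) ^ m
          = e_j * ((L (Fin.castLE hmn 0)).radial w) ^ m := by
        intro w
        obtain ⟨η, rfl⟩ := hsurj u₀ w
        -- inner core equality at η
        have hinnereq : (∫ u, ∏ j', (Fν η j' u) ^ ((m : ℝ)⁻¹) ∂μ) ^ m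
            = ∏ j', ∫ u, Fν η j' u ∂μ := by
          rw [← keyρ η, Finset.prod_congr rfl
            (fun j' (_ : j' ∈ Finset.univ) => (keyh η j').symm)]
          exact hptEq (act η e)
        have hae := (hcoreμ η).2 hinnereq
        have haejk : (fun u => (∫ u', Fν η 0 u' ∂μ) * Fν η j u)
            =ᵐ[μ] (fun u => (∫ u', Fν η j u' ∂μ) * Fν η 0 u) := by
          filter_upwards [hae] with u hu using hu j 0
        have hptu : (∫ u', Fν η 0 u' ∂μ) * Fν η j u₀ = (∫ u', Fν η j u' ∂μ) * Fν η 0 u₀ :=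
          eq_at_pos_point
            (continuous_const.mul (hFνc η j)) (continuous_const.mul (hFνc η 0)) haejk hu₀
        have hI0 : ∫ u', Fν η 0 u' ∂μ = h 0 (act η e) := (keyh η 0).symm
        have hIj : ∫ u', Fν η j u' ∂μ = h j (act η e) := (keyh η j).symm
        rw [hI0, hIj] at hptu
        have hGf0 : Gf (act η u₀) ≠ 0 := (hGfp _).ne'
        have hh0 : h 0 (act η e) ≠ 0 := (hhp 0 _).ne'
        have hhj : h j (act η e) = e_j * h 0 (act η e) := hprop j _
        rw [hhj] at hptu
        have h7 : h 0 (act η e) * (((L (Fin.castLE hmn j)).radial (act η u₀)) ^ m * Gf (act η u₀))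
            = (e_j * h 0 (act η e))
              * (((L (Fin.castLE hmn 0)).radial (act η u₀)) ^ m * Gf (act η u₀)) := hptu
        apply mul_right_cancel₀ hGf0
        apply mul_left_cancel₀ hh0
        linear_combination h7
      refine ⟨e_j ^ ((m : ℝ)⁻¹), Real.rpow_pos_of_pos he_pos _, fun w => ?_⟩
      exact root_scale hm0 ((L _).pos w).le ((L _).pos w).le he_pos.le (hmain w)
    intro j k
    obtain ⟨cj, hcj, hj⟩ := hLprop j
    obtain ⟨ck, hck, hk⟩ := hLprop k
    refine ⟨cj / ck, div_pos hcj hck, fun w => ?_⟩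
    rw [hj w, hk w]
    field_simp
  · -- dilates → equality
    intro hD
    have hLc : ∀ j : Fin m, ∃ c : ℝ, 0 < c ∧ ∀ w,
        (L (Fin.castLE hmn j)).radial w = c * (L (Fin.castLE hmn 0)).radial w := fun j => hD j 0
    choose c hc hcs using hLc
    set Cm : ℝ := ∏ j, c j with hCm_def
    have hρit : ∀ v, ρ v = Cm * h 0 v := by
      intro v
      obtain ⟨η, rfl⟩ := htrans v
      show (Ψm L).radial (act η e) = Cm * (Ψm (Fm 0)).radial (act η e)
      rw [hrep L η, hrep (Fm 0) η, ← integral_const_mul]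
      congr 1
      funext u
      rw [split1 (act η u), split2 0 (act η u),
        Finset.prod_congr rfl (fun j (_ : j ∈ Finset.univ) => hcs j (act η u)),
        Finset.prod_mul_distrib, Finset.prod_const, Finset.card_univ, Fintype.card_fin,
        ← hCm_def]
      ring
    have hhit : ∀ (j : Fin m) v, h j v = c j ^ m * h 0 v := by
      intro j v
      obtain ⟨η, rfl⟩ := htrans v
      show (Ψm (Fm j)).radial (act η e) = c j ^ m * (Ψm (Fm 0)).radial (act η e)
      rw [hrep (Fm j) η, hrep (Fm 0) η, ← integral_const_mul]
      congr 1
      funext u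
      rw [split2 j (act η u), split2 0 (act η u), hcs j (act η u), mul_pow]
      ring
    rw [hWdef, Finset.prod_congr rfl (fun j (_ : j ∈ Finset.univ) => hWjdef j)]
    have h1 : ∫ v, ρ v ^ p ∂(sphMeasure n)
        = Cm ^ p * ∫ v, (h 0 v) ^ p ∂(sphMeasure n) := by
      rw [← integral_const_mul]
      congr 1
      funext v
      rw [hρit v, mul_pow]
    have h2 : ∀ j : Fin m, ∫ v, (h j v) ^ p ∂(sphMeasure n)
        = (c j) ^ (m * p) * ∫ v, (h 0 v) ^ p ∂(sphMeasure n) := by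
      intro j
      rw [← integral_const_mul]
      congr 1
      funext v
      rw [hhit j v, mul_pow, ← pow_mul]
    rw [h1, Finset.prod_congr rfl (fun j (_ : j ∈ Finset.univ) => by rw [h2 j])]
    have hfact : ∀ j : Fin m,
        (1/(n:ℝ)) * ((c j) ^ (m * p) * ∫ v, (h 0 v) ^ p ∂(sphMeasure n))
          = (c j) ^ (m * p) * ((1/(n:ℝ)) * ∫ v, (h 0 v) ^ p ∂(sphMeasure n)) :=
      fun j => by ring
    rw [Finset.prod_congr rfl (fun j (_ : j ∈ Finset.univ) => hfact j),
      Finset.prod_mul_distrib, Finset.prod_const, Finset.card_univ, Fintype.card_fin,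
      Finset.prod_pow, ← hCm_def]
    ring
end
end
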